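/- Let W ∈ C²(ℝ^{d×d}; ℝ) with S = DW, p ≥ 2, and suppose there exist constants c > 0 and K > 0 such that (S(F₁) - S(F₂)) : (F₁ - F₂) ≥ (c(|F₁|^{p-2} + |F₂|^{p-2}) - K)|F₁ - F₂|² for all F₁, F₂. Then the Hessian of W̃(F) := W(F) + (K/2)|F|² satisfies D²W̃(F)[H, H] ≥ 2c|F|^{p-2}|H|² for all matrices F and H. -/

import Mathlib

open Topology Filter Set

lemma stmt2_aux {E : Type*} [NormedAddCommGroup E] [InnerProductSpace ℝ E] [CompleteSpace E]
    (p : ℝ) (hp : 2 ≤ p) (W : E → ℝ) (hW : ContDiff ℝ 2 W)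
    (c K : ℝ) (hc : 0 < c) (hK : 0 < K)
    (h : ∀ F₁ F₂ : E,
      (inner ℝ (gradient W F₁ - gradient W F₂) (F₁ - F₂) : ℝ) ≥
        (c * (‖F₁‖ ^ (p - 2) + ‖F₂‖ ^ (p - 2)) - K) * ‖F₁ - F₂‖ ^ 2) :
    ∀ F H : E,
      iteratedFDeriv ℝ 2 (fun G => W G + K / 2 * ‖G‖ ^ 2) F ![H, H] ≥
        2 * c * ‖F‖ ^ (p - 2) * ‖H‖ ^ 2 := by
  intro F H
  have hq2 : ContDiff ℝ 2 (fun G : E => K / 2 * ‖G‖ ^ 2) :=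
    (contDiff_const).mul (contDiff_norm_sq ℝ)
  have hWt2 : ContDiff ℝ 2 (fun G : E => W G + K / 2 * ‖G‖ ^ 2) := hW.add hq2
  -- derivative of the quadratic part
  have hq' : ∀ G : E, HasFDerivAt (fun x : E => K / 2 * ‖x‖ ^ 2)
      (K • (innerSL ℝ G)) G := by
    intro G
    have h1 : HasFDerivAt (fun x : E => (inner ℝ x x : ℝ))
        ((fderivInnerCLM ℝ ((G : E), G)).comp ((ContinuousLinearMap.id ℝ E).prod
          (ContinuousLinearMap.id ℝ E))) G :=
      (hasFDerivAt_id G).inner ℝ (hasFDerivAt_id G)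
    have h2 : HasFDerivAt (fun x : E => K / 2 * (inner ℝ x x : ℝ))
        ((K / 2) • ((fderivInnerCLM ℝ ((G : E), G)).comp ((ContinuousLinearMap.id ℝ E).prod
          (ContinuousLinearMap.id ℝ E)))) G := h1.const_mul (K / 2)
    have heq : (fun x : E => K / 2 * (inner ℝ x x : ℝ)) = fun x : E => K / 2 * ‖x‖ ^ 2 := by
      ext x; rw [real_inner_self_eq_norm_sq]
    rw [heq] at h2
    refine h2.congr_fderiv ?_
    ext y
    simp [fderivInnerCLM_apply, real_inner_comm]
    ring
  have hWdiff : ∀ G : E, DifferentiableAt ℝ W G := fun G =>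
    (hW.differentiable (by norm_num)).differentiableAt
  have hΦval : ∀ G : E, fderiv ℝ (fun G : E => W G + K / 2 * ‖G‖ ^ 2) G
      = fderiv ℝ W G + K • (innerSL ℝ G) := by
    intro G
    exact ((hWdiff G).hasFDerivAt.add (hq' G)).fderiv
  have hgradW : ∀ (G y : E), (inner ℝ (gradient W G) y : ℝ) = fderiv ℝ W G y := by
    intro G y
    exact InnerProductSpace.toDual_symm_apply
  set Φ : E → (E →L[ℝ] ℝ) := fderiv ℝ (fun G : E => W G + K / 2 * ‖G‖ ^ 2) with hΦdef
  have hΦdiff : DifferentiableAt ℝ Φ F :=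
    ((hWt2.fderiv_right (m := 1) le_rfl).differentiable one_ne_zero).differentiableAt
  have hγ : HasDerivAt (fun t : ℝ => F + t • H) H 0 := by
    simpa using ((hasDerivAt_id (0:ℝ)).smul_const H).const_add F
  have hF' : HasFDerivAt Φ (fderiv ℝ Φ F) (F + (0:ℝ) • H) := by
    simpa using hΦdiff.hasFDerivAt
  have hcomp : HasDerivAt (fun t : ℝ => Φ (F + t • H)) (fderiv ℝ Φ F H) 0 := by
    exact hF'.comp_hasDerivAt 0 hγ
  have hψ : HasDerivAt (fun t : ℝ => Φ (F + t • H) H) (fderiv ℝ Φ F H H) 0 :=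
    ((ContinuousLinearMap.apply ℝ ℝ H).hasFDerivAt.comp_hasDerivAt 0 hcomp)
  set ψ : ℝ → ℝ := fun t => Φ (F + t • H) H with hψdef
  have hslope : Filter.Tendsto (slope ψ 0) (𝓝[>] (0:ℝ)) (𝓝 (fderiv ℝ Φ F H H)) := by
    have := hasDerivAt_iff_tendsto_slope.mp hψ
    exact this.mono_left (nhdsWithin_mono _ fun t ht => ne_of_gt ht)
  have hbound : ∀ t ∈ Set.Ioi (0:ℝ),
      c * (‖F + t • H‖ ^ (p - 2) + ‖F‖ ^ (p - 2)) * ‖H‖ ^ 2 ≤ slope ψ 0 t := by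
    intro t ht
    have ht' : (0:ℝ) < t := ht
    have hΔ := h (F + t • H) F
    have hsub : (F + t • H) - F = t • H := by abel
    rw [hsub] at hΔ
    have hnorm : ‖t • H‖ ^ 2 = t ^ 2 * ‖H‖ ^ 2 := by
      rw [norm_smul]; simp [Real.norm_eq_abs, mul_pow, sq_abs]
    have hin : (inner ℝ (gradient W (F + t • H) - gradient W F) (t • H) : ℝ)
        = t * (inner ℝ (gradient W (F + t • H) - gradient W F) H : ℝ) :=
      real_inner_smul_right _ _ _
    rw [hin, hnorm] at hΔ
    have hv : ∀ G : E, Φ G H = (inner ℝ (gradient W G) H : ℝ) + K * (inner ℝ G H : ℝ) := by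
      intro G
      rw [hΦval]
      simp only [ContinuousLinearMap.add_apply, ContinuousLinearMap.smul_apply,
        innerSL_apply_apply, smul_eq_mul, hgradW]
    have hψt : ψ t - ψ 0 = (inner ℝ (gradient W (F + t • H) - gradient W F) H : ℝ)
        + K * (t * ‖H‖ ^ 2) := by
      have h0 : F + (0:ℝ) • H = F := by simp
      simp only [hψdef, h0, hv]
      rw [inner_sub_left, inner_add_left, real_inner_smul_left, real_inner_self_eq_norm_sq]
      ring
    have hsl : slope ψ 0 t = (ψ t - ψ 0) / t := by
      rw [slope_def_field]; rw [sub_zero]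
    rw [hsl, hψt]
    rw [ge_iff_le, ← sub_nonneg] at hΔ
    rw [le_div_iff₀ ht']
    nlinarith [hΔ]
  have hcont : Filter.Tendsto (fun t : ℝ => c * (‖F + t • H‖ ^ (p - 2) + ‖F‖ ^ (p - 2)) * ‖H‖ ^ 2)
      (𝓝[>] (0:ℝ)) (𝓝 (2 * c * ‖F‖ ^ (p - 2) * ‖H‖ ^ 2)) := by
    have h1 : ContinuousAt (fun t : ℝ => ‖F + t • H‖ ^ (p - 2)) 0 := by
      apply ContinuousAt.comp (g := fun x : ℝ => x ^ (p - 2))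
      · exact Real.continuousAt_rpow_const _ _ (Or.inr (by linarith))
      · exact (continuous_norm.comp
          (continuous_const.add (continuous_id.smul continuous_const))).continuousAt
    have h2 : ContinuousAt (fun t : ℝ =>
        c * (‖F + t • H‖ ^ (p - 2) + ‖F‖ ^ (p - 2)) * ‖H‖ ^ 2) 0 :=
      ((continuousAt_const.mul (h1.add continuousAt_const)).mul continuousAt_const)
    have h3 : Filter.Tendsto (fun t : ℝ => c * (‖F + t • H‖ ^ (p - 2) + ‖F‖ ^ (p - 2)) * ‖H‖ ^ 2)
        (𝓝[>] (0:ℝ))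
        (𝓝 (c * (‖F + (0:ℝ) • H‖ ^ (p - 2) + ‖F‖ ^ (p - 2)) * ‖H‖ ^ 2)) :=
      h2.tendsto.mono_left nhdsWithin_le_nhds
    have h4 : c * (‖F + (0:ℝ) • H‖ ^ (p - 2) + ‖F‖ ^ (p - 2)) * ‖H‖ ^ 2
        = 2 * c * ‖F‖ ^ (p - 2) * ‖H‖ ^ 2 := by
      rw [zero_smul, add_zero]; ring
    rwa [h4] at h3
  have hfinal : 2 * c * ‖F‖ ^ (p - 2) * ‖H‖ ^ 2 ≤ fderiv ℝ Φ F H H :=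
    le_of_tendsto_of_tendsto hcont hslope (eventually_mem_nhdsWithin.mono fun t ht => hbound t ht)
  rw [ge_iff_le, iteratedFDeriv_two_apply]
  simpa using hfinal

/-- Under the global strengthened Andrews–Ball condition (A4′), the Hessian of
`W̃(F) = W(F) + (K/2)‖F‖²` satisfies `D²W̃(F)[H,H] ≥ 2c‖F‖^(p-2)‖H‖²`. -/
theorem stmt2 (d : ℕ) (p : ℝ) (hp : 2 ≤ p)
    (W : EuclideanSpace ℝ (Fin d × Fin d) → ℝ) (hW : ContDiff ℝ 2 W)
    (c K : ℝ) (hc : 0 < c) (hK : 0 < K)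
    (h : ∀ F₁ F₂ : EuclideanSpace ℝ (Fin d × Fin d),
      (inner ℝ (gradient W F₁ - gradient W F₂) (F₁ - F₂) : ℝ) ≥
        (c * (‖F₁‖ ^ (p - 2) + ‖F₂‖ ^ (p - 2)) - K) * ‖F₁ - F₂‖ ^ 2) :
    ∀ F H : EuclideanSpace ℝ (Fin d × Fin d),
      iteratedFDeriv ℝ 2 (fun G => W G + K / 2 * ‖G‖ ^ 2) F ![H, H] ≥
        2 * c * ‖F‖ ^ (p - 2) * ‖H‖ ^ 2 := by
  exact stmt2_aux p hp W hW c K hc hK h
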